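/- Then, in ℚ⟦t⟧, ∑_{k≥2} F_Vb(k)·t^k = [ (1+3t²)(p−1)/(2³·3·(1−t²)²) + (1−(−1/p))/(2³·(1−t²)) + (1−(−3/p))/(2·3·(1+t²+t⁴)) − bh/(2²·(1−t²)) ]·t². (This is the equivalence of the closed formula and the generating function for s_k(p,Vb) in the paper's Theorem on Saito-Kurokawa type.) -/

import Mathlib

open PowerSeries

noncomputable section

/-- `c₃(k) = [1,−1,0;3]_k` -/
def c3 (k : ℕ) : ℚ := if k % 3 = 0 then 1 else if k % 3 = 1 then -1 else 0

/-- `ĉ₃(k) = [0,1,−1;3]_k` -/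
def c3hat (k : ℕ) : ℚ := if k % 3 = 0 then 0 else if k % 3 = 1 then 1 else -1

/-- `c₄(k) = [1,0,0,−1;4]_k` -/
def c4 (k : ℕ) : ℚ := if k % 4 = 0 then 1 else if k % 4 = 3 then -1 else 0

/-- `c₄′(k) = [1,−1,−1,1;4]_k` -/
def c4' (k : ℕ) : ℚ := if k % 4 = 0 then 1 else if k % 4 = 3 then 1 else -1

/-- `c₅(k) = [1,0,0,−1,0;5]_k` -/
def c5 (k : ℕ) : ℚ := if k % 5 = 0 then 1 else if k % 5 = 3 then -1 else 0

/-- `c₆(k) = [1,0,0,−1,0,0;6]_k` -/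
def c6 (k : ℕ) : ℚ := if k % 6 = 0 then 1 else if k % 6 = 3 then -1 else 0

/-- `c₆′(k) = [0,1,0,0,−1,0;6]_k` -/
def c6' (k : ℕ) : ℚ := if k % 6 = 1 then 1 else if k % 6 = 4 then -1 else 0

/-- `ĉ₆(k) = [0,1,1,0,−1,−1;6]_k` -/
def c6hat (k : ℕ) : ℚ := if k % 6 = 1 ∨ k % 6 = 2 then 1 else if k % 6 = 4 ∨ k % 6 = 5 then -1 else 0

/-- `c₁₂(k) = [1,0,0,−1,−1,−1,−1,0,0,1,1,1;12]_k` -/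
def c12 (k : ℕ) : ℚ :=
  if k % 12 = 0 ∨ k % 12 = 9 ∨ k % 12 = 10 ∨ k % 12 = 11 then 1
  else if k % 12 = 3 ∨ k % 12 = 4 ∨ k % 12 = 5 ∨ k % 12 = 6 then -1 else 0

/-- `f₄(k) = [k−2,−k+1,−k+2,k−1;4]_k` -/
def f4 (k : ℕ) : ℚ :=
  if k % 4 = 0 then (k : ℚ) - 2 else if k % 4 = 1 then -(k : ℚ) + 1
  else if k % 4 = 2 then -(k : ℚ) + 2 else (k : ℚ) - 1

/-- `f₆(k) = [k−3,−2k+2,−2k+4,k,k−1,k−2;6]_k` -/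
def f6 (k : ℕ) : ℚ :=
  if k % 6 = 0 then (k : ℚ) - 3 else if k % 6 = 1 then -2 * (k : ℚ) + 2
  else if k % 6 = 2 then -2 * (k : ℚ) + 4 else if k % 6 = 3 then (k : ℚ)
  else if k % 6 = 4 then (k : ℚ) - 1 else (k : ℚ) - 2

/-- The Legendre symbol `(−1/p)`, as a rational number. -/
def eps1 (p : ℕ) [Fact p.Prime] : ℚ := (legendreSym p (-1) : ℚ)

/-- The Legendre symbol `(−3/p)`, as a rational number. -/
def eps3 (p : ℕ) [Fact p.Prime] : ℚ := (legendreSym p (-3) : ℚ)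

/-- `b = 1` if `p ≡ 1 (mod 4)`, `b = 2` if `p ≡ 7 (mod 8)`, `b = 4` if `p ≡ 3 (mod 8)`. -/
def bb (p : ℕ) : ℚ := if p % 4 = 1 then 1 else if p % 8 = 7 then 2 else 4

/-- The closed formula `F_Vb(k)` for `s_k(p, Vb)`; `h` denotes the class number of `ℚ(√−p)`. -/
def F_Vb (p : ℕ) [Fact p.Prime] (h : ℕ) (k : ℕ) : ℚ :=
  if k % 2 = 0 then
    (2 * (k : ℚ) - 3) * ((p : ℚ) - 1) / (2 ^ 3 * 3) + (1 - eps1 p) / 2 ^ 3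
    - c3hat k * (1 - eps3 p) / (2 * 3) - bb p * (h : ℚ) / 2 ^ 2
  else 0

def g1 : ℕ → ℚ := fun n => if n % 2 = 0 then 2 * (n : ℚ) + 1 else 0
def g2 : ℕ → ℚ := fun n => if n % 2 = 0 then 1 else 0
def g3 : ℕ → ℚ := fun n => if n % 6 = 0 then 1 else if n % 6 = 2 then -1 else 0

lemma hmul2 : (1 - X ^ 2 : ℚ⟦X⟧) * PowerSeries.mk g2 = 1 := by
  have : (1 - X ^ 2 : ℚ⟦X⟧) * PowerSeries.mk g2
      = PowerSeries.mk g2 - PowerSeries.mk g2 * X ^ 2 := by ring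
  rw [this]
  ext n
  simp only [map_sub, coeff_mk, coeff_mul_X_pow', coeff_one]
  rcases n with _ | _ | n
  · simp [g2]
  · simp [g2]
  · have h1 : n + 1 + 1 - 2 = n := by omega
    have h2 : (n + 1 + 1) % 2 = n % 2 := by omega
    simp [g2, h1, h2]

lemma hmul3 : (1 + X ^ 2 + X ^ 4 : ℚ⟦X⟧) * PowerSeries.mk g3 = 1 := by
  have : (1 + X ^ 2 + X ^ 4 : ℚ⟦X⟧) * PowerSeries.mk g3
      = PowerSeries.mk g3 + PowerSeries.mk g3 * X ^ 2 + PowerSeries.mk g3 * X ^ 4 := by ring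
  rw [this]
  ext n
  simp only [map_add, coeff_mk, coeff_mul_X_pow', coeff_one]
  unfold g3
  split_ifs <;> norm_num <;> omega

lemma hmul1 : ((1 - X ^ 2 : ℚ⟦X⟧) ^ 2) * PowerSeries.mk g1 = 1 + 3 * X ^ 2 := by
  have h3 : (3 : ℚ⟦X⟧) = C 3 := (map_ofNat C 3).symm
  have : ((1 - X ^ 2 : ℚ⟦X⟧) ^ 2) * PowerSeries.mk g1
      = PowerSeries.mk g1 - PowerSeries.mk g1 * X ^ 2 - PowerSeries.mk g1 * X ^ 2
        + PowerSeries.mk g1 * X ^ 4 := by ring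
  rw [this, h3]
  ext n
  simp only [map_add, map_sub, coeff_mk, coeff_mul_X_pow', coeff_one, coeff_C_mul, coeff_X_pow]
  rcases n with _ | _ | _ | _ | n
  · norm_num [g1]
  · norm_num [g1]
  · norm_num [g1]
  · norm_num [g1]
  · have e2 : n + 4 - 2 = n + 2 := by omega
    have e4 : n + 4 - 4 = n := by omega
    have m2 : (n + 4) % 2 = n % 2 := by omega
    have m2' : (n + 2) % 2 = n % 2 := by omega
    simp only [e2, e4, m2, m2', g1]
    by_cases hm : n % 2 = 0 <;> simp [hm] <;> push_cast <;> ring_nf <;> omega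


/-- Equivalence of the closed formula and the generating function for `s_k(p, Vb)`:
`∑_{k≥2} F_Vb(k)·t^k = [(1+3t²)(p−1)/(2³·3·(1−t²)²) + (1−(−1/p))/(2³·(1−t²))
  + (1−(−3/p))/(2·3·(1+t²+t⁴)) − bh/(2²·(1−t²))]·t²` in `ℚ⟦t⟧`.
Here `h` is the class number of `ℚ(√−p)`; the identity holds for every `h`. -/
theorem stmt_2 (p : ℕ) [Fact p.Prime] (hp : 5 ≤ p) (h : ℕ) :
    (PowerSeries.mk fun k => if 2 ≤ k then F_Vb p h k else 0) =
      ((1 + 3 * X ^ 2) * C (((p : ℚ) - 1) / (2 ^ 3 * 3)) * ((1 - X ^ 2) ^ 2 : PowerSeries ℚ)⁻¹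
        + C ((1 - eps1 p) / 2 ^ 3) * (1 - X ^ 2 : PowerSeries ℚ)⁻¹
        + C ((1 - eps3 p) / (2 * 3)) * (1 + X ^ 2 + X ^ 4 : PowerSeries ℚ)⁻¹
        - C (bb p * (h : ℚ) / 2 ^ 2) * (1 - X ^ 2 : PowerSeries ℚ)⁻¹) * X ^ 2 := by
  have hc2 : constantCoeff (1 - X ^ 2 : ℚ⟦X⟧) ≠ 0 := by simp
  have hc2' : constantCoeff ((1 - X ^ 2 : ℚ⟦X⟧) ^ 2) ≠ 0 := by simp
  have hc3 : constantCoeff (1 + X ^ 2 + X ^ 4 : ℚ⟦X⟧) ≠ 0 := by simp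
  have i2 : (1 - X ^ 2 : ℚ⟦X⟧)⁻¹ = PowerSeries.mk g2 := by
    rw [eq_comm, eq_inv_iff_mul_eq_one hc2, mul_comm]; exact hmul2
  have i3 : (1 + X ^ 2 + X ^ 4 : ℚ⟦X⟧)⁻¹ = PowerSeries.mk g3 := by
    rw [eq_comm, eq_inv_iff_mul_eq_one hc3, mul_comm]; exact hmul3
  have i1 : ((1 - X ^ 2 : ℚ⟦X⟧) ^ 2)⁻¹ * (1 + 3 * X ^ 2) = PowerSeries.mk g1 := by
    calc ((1 - X ^ 2 : ℚ⟦X⟧) ^ 2)⁻¹ * (1 + 3 * X ^ 2)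
        = ((1 - X ^ 2 : ℚ⟦X⟧) ^ 2)⁻¹ * ((1 - X ^ 2) ^ 2 * PowerSeries.mk g1) := by rw [hmul1]
      _ = (((1 - X ^ 2 : ℚ⟦X⟧) ^ 2)⁻¹ * (1 - X ^ 2) ^ 2) * PowerSeries.mk g1 := by ring
      _ = PowerSeries.mk g1 := by rw [PowerSeries.inv_mul_cancel _ hc2', one_mul]
  have t1 : (1 + 3 * X ^ 2) * C (((p : ℚ) - 1) / (2 ^ 3 * 3)) * ((1 - X ^ 2) ^ 2 : ℚ⟦X⟧)⁻¹
      = C (((p : ℚ) - 1) / (2 ^ 3 * 3)) * PowerSeries.mk g1 := by rw [← i1]; ring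
  rw [t1, i2, i3]
  ext n
  simp only [coeff_mk, coeff_mul_X_pow', map_add, map_sub, coeff_C_mul]
  by_cases hn : 2 ≤ n
  · simp only [hn, if_true, coeff_mk]
    unfold F_Vb c3hat g1 g2 g3
    rw [Nat.cast_sub hn]
    split_ifs <;> first | (exfalso; omega) | (push_cast; ring)
  · simp [hn]
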